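/- Let a best-first search expand nodes of a (possibly infinite) tree in nondecreasing order of a node value f, where f is monotonically nondecreasing along tree edges (f(child) ≥ f(parent)), every node has finitely many children, and goal nodes exist with finite value. If there exists a goal node g with f(g) = c* such that every node on the path from the root to g has value ≤ c*, and only finitely many nodes in the tree have value ≤ c* (for every real bound, finitely many nodes have value below it), then best-first search terminates and the first goal node it expands has value c* equal to the minimum value over all goal nodes. -/
import Mathlib


/-- Abstract optimality/termination of best-first search on a (possibly infinite)
tree given by `parent`, rooted at `root` (with `parent root = root`): `f` is
nondecreasing along tree edges, every node has finitely many children, and for every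
bound only finitely many nodes have value below it.  The run `exp` enumerates the
expanded nodes: it starts at the root and, until the first goal is expanded, always
expands a not-yet-expanded node whose parent was already expanded and whose `f`-value
is minimal on the frontier.  If there is a goal node `g` reachable from the root with
`f g = c*`, whose ancestors all have value `≤ c*`, and `c*` is minimal among goal
values, then the search expands a goal node after finitely many steps, it is the first
goal expanded, and its value is `c*`, the minimum value over all goal nodes. -/
theorem best_first_search_optimal {ν : Type*}
    (root : ν) (parent : ν → ν) (f : ν → ℝ) (goal : ν → Prop)
    (cstar : ℝ) (g : ν) (exp : ℕ → ν)
    (hparent_root : parent root = root)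
    (hmono : ∀ x, f (parent x) ≤ f x)
    (hchildfin : ∀ x, {y | parent y = x}.Finite)
    (hlevelfin : ∀ c : ℝ, {x | f x ≤ c}.Finite)
    (hg : goal g) (hgval : f g = cstar)
    (hreach : ∃ n : ℕ, parent^[n] g = root)
    (hpath : ∀ n : ℕ, f (parent^[n] g) ≤ cstar)
    (hcmin : ∀ h, goal h → cstar ≤ f h)
    (hexp0 : exp 0 = root)
    (hgen : ∀ n : ℕ, 0 < n → (∀ m < n, ¬ goal (exp m)) →
      parent (exp n) ∈ exp '' Set.Iio n ∧ exp n ∉ exp '' Set.Iio n)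
    (hbest : ∀ n : ℕ, 0 < n → (∀ m < n, ¬ goal (exp m)) →
      ∀ y, parent y ∈ exp '' Set.Iio n → y ∉ exp '' Set.Iio n → f (exp n) ≤ f y) :
    ∃ N : ℕ, goal (exp N) ∧ (∀ m < N, ¬ goal (exp m)) ∧
      f (exp N) = cstar ∧ ∀ h, goal h → f (exp N) ≤ f h := by
  classical
  obtain ⟨k, hk⟩ := hreach
  have hfrontier : ∀ n : ℕ, (∀ m < n, ¬ goal (exp m)) → f (exp n) ≤ cstar := by
    intro n hn
    rcases Nat.eq_zero_or_pos n with rfl | hpos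
    · rw [hexp0, ← hk]; exact hpath k
    · have hgnot : g ∉ exp '' Set.Iio n := by
        rintro ⟨m, hm, rfl⟩
        exact hn m hm hg
      have hex : ∃ j, parent^[j] g ∈ exp '' Set.Iio n := by
        refine ⟨k, ?_⟩
        rw [hk, ← hexp0]
        exact ⟨0, hpos, rfl⟩
      set j := Nat.find hex with hjdef
      have hj : parent^[j] g ∈ exp '' Set.Iio n := Nat.find_spec hex
      have hj0 : j ≠ 0 := by
        intro h
        apply hgnot
        simpa [h] using hj
      have hy : parent^[j-1] g ∉ exp '' Set.Iio n :=
        Nat.find_min hex (by omega)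
      have hpy : parent (parent^[j-1] g) ∈ exp '' Set.Iio n := by
        have heq : parent (parent^[j-1] g) = parent^[j] g := by
          rw [← Function.iterate_succ_apply' parent (j-1) g]
          congr 1
          omega
        rw [heq]; exact hj
      calc f (exp n) ≤ f (parent^[j-1] g) := hbest n hpos hn _ hpy hy
        _ ≤ cstar := hpath _
  have hexists : ∃ N, goal (exp N) := by
    by_contra h
    push_neg at h
    have key : ∀ a b : ℕ, a < b → exp a ≠ exp b := by
      intro a b hlt hab
      exact (hgen b (by omega) (fun m _ => h m)).2 ⟨a, hlt, hab⟩
    have hinj : Function.Injective exp := by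
      intro a b hab
      rcases lt_trichotomy a b with hlt | heq | hlt
      · exact absurd hab (key a b hlt)
      · exact heq
      · exact absurd hab.symm (key b a hlt)
    have hinf : Set.Infinite {x | f x ≤ cstar} :=
      Set.infinite_of_injective_forall_mem (f := exp) hinj
        (fun n => hfrontier n (fun m _ => h m))
    exact hinf (hlevelfin cstar)
  refine ⟨Nat.find hexists, Nat.find_spec hexists,
    fun m hm => Nat.find_min hexists hm, ?_, ?_⟩
  · have h1 : f (exp (Nat.find hexists)) ≤ cstar :=
      hfrontier _ (fun m hm => Nat.find_min hexists hm)
    have h2 : cstar ≤ f (exp (Nat.find hexists)) :=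
      hcmin _ (Nat.find_spec hexists)
    linarith
  · intro h hh
    have h1 : f (exp (Nat.find hexists)) ≤ cstar :=
      hfrontier _ (fun m hm => Nat.find_min hexists hm)
    exact h1.trans (hcmin h hh)
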